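/- For two randomized classifiers f and g on a single group whose accepted mass satisfies: g accepts the top-mass prefix (by decreasing score) and f accepts the same total false-positive mass but not the top prefix, the score of g's accepted set strictly exceeds the score of f's accepted set, and consequently g's accepted probability mass strictly exceeds f's. -/
import Mathlib


open Finset

/-- Single-group exchange lemma: if `g` accepts a top-mass prefix (by decreasing score),
`f` has the same (positive) false-positive mass as `g` but differs from `g` on a
positive-mass point, then the score of `g`'s accepted fractional set strictly exceeds
that of `f`'s, and consequently `g`'s accepted mass strictly exceeds `f`'s. -/
theorem stmt12 {X : Type*} [Fintype X] (P S : X → ℝ)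
    (hP : ∀ x, 0 ≤ P x) (hS : ∀ x, S x ∈ Set.Icc (0 : ℝ) 1)
    (hdistinct : ∀ x x', 0 < P x → 0 < P x' → S x = S x' → x = x')
    (f g : X → ℝ)
    (hf : ∀ x, f x ∈ Set.Icc (0 : ℝ) 1) (hg : ∀ x, g x ∈ Set.Icc (0 : ℝ) 1)
    (hprefix : ∀ x x', 0 < P x → 0 < P x' → S x' < S x → 0 < g x' → g x = 1)
    (hfp : ∑ x, f x * P x * (1 - S x) = ∑ x, g x * P x * (1 - S x))
    (hfppos : 0 < ∑ x, g x * P x * (1 - S x))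
    (hne : ∃ x, 0 < P x ∧ f x ≠ g x) :
    (∑ x, f x * P x * S x) / (∑ x, f x * P x) <
      (∑ x, g x * P x * S x) / (∑ x, g x * P x) ∧
    (∑ x, f x * P x) < (∑ x, g x * P x) := by
  -- there is a positive term in g's false-positive sum
  obtain ⟨x₁, hx₁⟩ : ∃ x, 0 < g x * P x * (1 - S x) := by
    by_contra h
    push_neg at h
    have : ∑ x, g x * P x * (1 - S x) ≤ 0 :=
      Finset.sum_nonpos (fun x _ => h x)
    linarith
  have hx₁g : 0 < g x₁ := by
    by_contra h
    push_neg at h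
    have : g x₁ = 0 := le_antisymm h (hg x₁).1
    rw [this] at hx₁; simp at hx₁
  have hx₁P : 0 < P x₁ := by
    by_contra h
    push_neg at h
    have : P x₁ = 0 := le_antisymm h (hP x₁)
    rw [this] at hx₁; simp at hx₁
  have hx₁S : S x₁ < 1 := by
    by_contra h
    push_neg at h
    have h1 : 1 - S x₁ ≤ 0 := by linarith
    nlinarith [mul_nonneg (hg x₁).1 (hP x₁)]
  -- the set of accepted positive-mass points
  set T : Finset X := Finset.univ.filter (fun x => 0 < P x ∧ 0 < g x) with hT
  have hx₁T : x₁ ∈ T := by simp [hT, hx₁P, hx₁g]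
  obtain ⟨x₀, hx₀T, hmin⟩ := T.exists_min_image S ⟨x₁, hx₁T⟩
  have hx₀P : 0 < P x₀ := (Finset.mem_filter.mp hx₀T).2.1
  have hx₀g : 0 < g x₀ := (Finset.mem_filter.mp hx₀T).2.2
  set θ : ℝ := S x₀ with hθ
  have hθ1 : θ < 1 := lt_of_le_of_lt (hmin x₁ hx₁T) hx₁S
  -- key pointwise inequality
  have key : ∀ x, 0 ≤ (S x - θ) * ((g x - f x) * P x) := by
    intro x
    rcases (hP x).eq_or_lt with hPx | hPx
    · rw [← hPx]; ring_nf; simp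
    · rcases lt_trichotomy (S x) θ with h | h | h
      · have hgx : g x = 0 := by
          by_contra hc
          have hgpos : 0 < g x := lt_of_le_of_ne (hg x).1 (Ne.symm hc)
          have hxT : x ∈ T := by simp [hT, hPx, hgpos]
          have := hmin x hxT
          linarith
        rw [hgx]
        have h1 : 0 ≤ (θ - S x) * (f x * P x) :=
          mul_nonneg (by linarith) (mul_nonneg (hf x).1 hPx.le)
        nlinarith [h1]
      · rw [h]; ring_nf; exact le_refl 0
      · have hgx : g x = 1 := hprefix x x₀ hPx hx₀P h hx₀g
        rw [hgx]
        have h1 : 0 ≤ (S x - θ) * ((1 - f x) * P x) :=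
          mul_nonneg (by linarith) (mul_nonneg (by linarith [(hf x).2]) hPx.le)
        nlinarith [h1]
  -- the exchange sum is nonnegative, and in fact positive
  have hA_nonneg : 0 ≤ ∑ x, (S x - θ) * ((g x - f x) * P x) :=
    Finset.sum_nonneg (fun x _ => key x)
  -- sum identities
  have hs2 : ∑ x, (g x - f x) * P x * (1 - S x) = 0 := by
    have : ∑ x, (g x - f x) * P x * (1 - S x)
        = ∑ x, g x * P x * (1 - S x) - ∑ x, f x * P x * (1 - S x) := by
      rw [← Finset.sum_sub_distrib]
      exact Finset.sum_congr rfl (fun x _ => by ring)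
    rw [this, ← hfp]; ring
  have hs3 : ∑ x, (g x - f x) * P x
      = ∑ x, (g x - f x) * P x * S x + ∑ x, (g x - f x) * P x * (1 - S x) := by
    rw [← Finset.sum_add_distrib]
    exact Finset.sum_congr rfl (fun x _ => by ring)
  have hAeq : ∑ x, (S x - θ) * ((g x - f x) * P x)
      = ∑ x, (g x - f x) * P x * S x - θ * ∑ x, (g x - f x) * P x := by
    rw [Finset.mul_sum, ← Finset.sum_sub_distrib]
    exact Finset.sum_congr rfl (fun x _ => by ring)
  -- strict positivity of the exchange sum
  have hA_pos : 0 < ∑ x, (S x - θ) * ((g x - f x) * P x) := by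
    rcases hA_nonneg.lt_or_eq with h | h
    · exact h
    · exfalso
      have hzero : ∀ x, (S x - θ) * ((g x - f x) * P x) = 0 := by
        intro x
        exact (Finset.sum_eq_zero_iff_of_nonneg (fun x _ => key x)).mp h.symm x
          (Finset.mem_univ x)
      have hsupp : ∀ x, x ≠ x₀ → (g x - f x) * P x = 0 := by
        intro x hx
        by_contra hc
        have hSx : S x = θ := by
          rcases mul_eq_zero.mp (hzero x) with h' | h'
          · linarith
          · exact absurd h' hc
        have hPx : 0 < P x := by
          rcases (hP x).eq_or_lt with h' | h'
          · exfalso; apply hc; rw [← h']; ring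
          · exact h'
        exact hx (hdistinct x x₀ hPx hx₀P hSx)
      have hsingle : ∑ x, (g x - f x) * P x * (1 - S x)
          = (g x₀ - f x₀) * P x₀ * (1 - S x₀) := by
        apply Finset.sum_eq_single x₀
        · intro b _ hb
          rw [hsupp b hb, zero_mul]
        · intro hb; exact absurd (Finset.mem_univ x₀) hb
      have hx₀d : (g x₀ - f x₀) * P x₀ = 0 := by
        rw [hsingle] at hs2
        have h1θ : 0 < 1 - S x₀ := by rw [← hθ] at *; linarith
        have := mul_eq_zero.mp hs2
        rcases this with h' | h'
        · exact h'
        · linarith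
      obtain ⟨z, hzP, hzne⟩ := hne
      have : (g z - f z) * P z = 0 := by
        by_cases hz : z = x₀
        · rw [hz]; exact hx₀d
        · exact hsupp z hz
      rcases mul_eq_zero.mp this with h' | h'
      · exact hzne (by linarith)
      · linarith
  -- conclude Σ gPS > Σ fPS
  have hs1_pos : 0 < ∑ x, (g x - f x) * P x * S x := by
    rw [hAeq, hs3, hs2] at hA_pos
    nlinarith
  have hdiff : ∑ x, (g x - f x) * P x * S x
      = ∑ x, g x * P x * S x - ∑ x, f x * P x * S x := by
    rw [← Finset.sum_sub_distrib]
    exact Finset.sum_congr rfl (fun x _ => by ring)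
  have hab : ∑ x, f x * P x * S x < ∑ x, g x * P x * S x := by
    rw [hdiff] at hs1_pos; linarith
  -- denominators split
  have hfPsum : ∑ x, f x * P x
      = ∑ x, f x * P x * (1 - S x) + ∑ x, f x * P x * S x := by
    rw [← Finset.sum_add_distrib]
    exact Finset.sum_congr rfl (fun x _ => by ring)
  have hgPsum : ∑ x, g x * P x
      = ∑ x, g x * P x * (1 - S x) + ∑ x, g x * P x * S x := by
    rw [← Finset.sum_add_distrib]
    exact Finset.sum_congr rfl (fun x _ => by ring)
  have ha : 0 ≤ ∑ x, f x * P x * S x :=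
    Finset.sum_nonneg (fun x _ =>
      mul_nonneg (mul_nonneg (hf x).1 (hP x)) (hS x).1)
  have hFpos : 0 < ∑ x, f x * P x * (1 - S x) := by rw [hfp]; exact hfppos
  constructor
  · rw [hfPsum, hgPsum, hfp, div_lt_div_iff₀ (by linarith) (by linarith)]
    nlinarith
  · rw [hfPsum, hgPsum, hfp]
    linarith
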